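/- Local Lipschitz-type estimate for B: let B(s) = s²log(s²) + A(s) where A(s) = -s²log(s²) for 0 ≤ s ≤ e^{-3} and A(s) = 3s² + 4e^{-3}s - e^{-6} for s ≥ e^{-3}. Then for every ε > 0 there exists C_ε > 0 such that |B(|z|) - B(|w|)| ≤ C_ε(|z|^{1+ε} + |w|^{1+ε})|z - w| for all z, w ∈ ℂ. -/

import Mathlib

open MeasureTheory

/-- The function `A` from the decomposition of the logarithmic nonlinearity. -/
noncomputable def Afun (s : ℝ) : ℝ :=
  if s ≤ Real.exp (-3) then -(s ^ 2 * Real.log (s ^ 2))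
  else 3 * s ^ 2 + 4 * Real.exp (-3) * s - Real.exp (-6)

/-- The function `B = F + A` where `F(s) = s² log s²`. -/
noncomputable def Bfun (s : ℝ) : ℝ :=
  s ^ 2 * Real.log (s ^ 2) + Afun s

/-- The derivative of `Bfun`. -/
noncomputable def Bder (s : ℝ) : ℝ :=
  if s ≤ Real.exp (-3) then 0 else 4 * s * Real.log s + 8 * s + 4 * Real.exp (-3)

lemma Bfun_eq_zero {s : ℝ} (hs : s ≤ Real.exp (-3)) : Bfun s = 0 := by
  simp [Bfun, Afun, hs]

lemma Bfun_eq {s : ℝ} (hs : Real.exp (-3) ≤ s) :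
    Bfun s = 2 * s ^ 2 * Real.log s + 3 * s ^ 2 + 4 * Real.exp (-3) * s - Real.exp (-6) := by
  have hspos : 0 < s := lt_of_lt_of_le (Real.exp_pos _) hs
  rcases eq_or_lt_of_le hs with h | h
  · rw [Bfun_eq_zero h.symm.le, ← h, Real.log_exp]
    have he : Real.exp (-3) * Real.exp (-3) = Real.exp (-6) := by
      rw [← Real.exp_add]; norm_num
    linear_combination (-1 : ℝ) * he
  · have : ¬ s ≤ Real.exp (-3) := not_le.mpr h
    simp only [Bfun, Afun, this, if_false]
    rw [show s ^ 2 = s * s by ring, Real.log_mul hspos.ne' hspos.ne']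
    ring

lemma hasDerivAt_Bfun (s : ℝ) : HasDerivAt Bfun (Bder s) s := by
  have hcpos : 0 < Real.exp (-3) := Real.exp_pos (-3)
  have hg : ∀ t : ℝ, 0 < t →
      HasDerivAt (fun u => 2 * u ^ 2 * Real.log u + 3 * u ^ 2 + 4 * Real.exp (-3) * u - Real.exp (-6))
        (4 * t * Real.log t + 8 * t + 4 * Real.exp (-3)) t := by
    intro t ht
    have h1 := (hasDerivAt_pow 2 t).const_mul (2 : ℝ)
    have h2 : HasDerivAt Real.log (1 / t) t := by
      simpa using Real.hasDerivAt_log ht.ne'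
    have h3 := h1.mul h2
    have h4 := (hasDerivAt_pow 2 t).const_mul (3 : ℝ)
    have h5 : HasDerivAt (fun u : ℝ => 4 * Real.exp (-3) * u) (4 * Real.exp (-3)) t := by
      simpa using (hasDerivAt_id t).const_mul (4 * Real.exp (-3))
    have := ((h3.add h4).add h5).sub_const (Real.exp (-6))
    refine this.congr_deriv ?_
    push_cast
    field_simp
    ring
  rcases lt_trichotomy s (Real.exp (-3)) with h | h | h
  · have hB : Bder s = 0 := by simp [Bder, h.le]
    rw [hB]
    have : Bfun =ᶠ[nhds s] (fun _ => (0 : ℝ)) := by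
      filter_upwards [eventually_lt_nhds h] with t ht
      exact Bfun_eq_zero ht.le
    exact (hasDerivAt_const s (0 : ℝ)).congr_of_eventuallyEq this
  · have hB : Bder s = 0 := by simp [Bder, h.le]
    rw [hB]
    have hspos' : 0 < s := h ▸ hcpos
    have hleft : HasDerivWithinAt Bfun 0 (Set.Iic s) s := by
      refine (hasDerivWithinAt_const s _ (0 : ℝ)).congr (fun t ht => Bfun_eq_zero (ht.trans h.le))
        (Bfun_eq_zero h.le)
    have hval : 4 * s * Real.log s + 8 * s + 4 * Real.exp (-3) = 0 := by
      rw [h, Real.log_exp]; ring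
    have hright : HasDerivWithinAt Bfun 0 (Set.Ici s) s := by
      have := (hg s hspos').hasDerivWithinAt (s := Set.Ici s)
      rw [hval] at this
      exact this.congr (fun t ht => Bfun_eq (h.ge.trans ht)) (Bfun_eq h.ge)
    have := hleft.union hright
    rw [Set.Iic_union_Ici] at this
    exact hasDerivWithinAt_univ.mp this
  · have hspos : 0 < s := hcpos.trans h
    have hB : Bder s = 4 * s * Real.log s + 8 * s + 4 * Real.exp (-3) := by
      simp [Bder, not_le.mpr h]
    rw [hB]
    refine (hg s hspos).congr_of_eventuallyEq ?_
    filter_upwards [eventually_gt_nhds h] with t ht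
    exact Bfun_eq ht.le

lemma Bder_bound {ε : ℝ} (hε : 0 < ε) {s : ℝ} (hs : 0 ≤ s) :
    |Bder s| ≤ (24 * Real.exp (3 * (1 + ε)) + 12 + 4 / ε) * s ^ (1 + ε) := by
  set C := 24 * Real.exp (3 * (1 + ε)) + 12 + 4 / ε with hC
  have hCpos : 0 < C := by positivity
  by_cases h : s ≤ Real.exp (-3)
  · simp only [Bder, h, if_true, abs_zero]
    positivity
  · push_neg at h
    have hspos : 0 < s := (Real.exp_pos _).trans h
    simp only [Bder, not_le.mpr h, if_false]
    have hrpow_pos : 0 < s ^ (1 + ε) := Real.rpow_pos_of_pos hspos _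
    by_cases h1 : 1 ≤ s
    · have hlog : 0 ≤ Real.log s := Real.log_nonneg h1
      have habs : |4 * s * Real.log s + 8 * s + 4 * Real.exp (-3)| =
          4 * s * Real.log s + 8 * s + 4 * Real.exp (-3) := by
        apply abs_of_nonneg; positivity
      rw [habs]
      have hsplit : s ^ (1 + ε) = s * s ^ ε := by
        rw [Real.rpow_add hspos, Real.rpow_one]
      have t1 : 4 * s * Real.log s ≤ (4 / ε) * s ^ (1 + ε) := by
        have := Real.log_le_rpow_div hspos.le hε
        calc 4 * s * Real.log s ≤ 4 * s * (s ^ ε / ε) := by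
              apply mul_le_mul_of_nonneg_left this (by positivity)
          _ = (4 / ε) * s ^ (1 + ε) := by rw [hsplit]; ring
      have hse : 1 ≤ s ^ ε := Real.one_le_rpow h1 hε.le
      have t2 : 8 * s ≤ 8 * s ^ (1 + ε) := by
        rw [hsplit]; nlinarith
      have t3 : 4 * Real.exp (-3) ≤ 4 * s ^ (1 + ε) := by
        have : Real.exp (-3) ≤ 1 := Real.exp_le_one_iff.mpr (by norm_num)
        have h2 : 1 ≤ s ^ (1 + ε) := Real.one_le_rpow h1 (by positivity)
        nlinarith
      have hCge : 4 / ε + 12 ≤ C := by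
        have : 0 < Real.exp (3 * (1 + ε)) := Real.exp_pos _
        nlinarith
      calc 4 * s * Real.log s + 8 * s + 4 * Real.exp (-3)
          ≤ (4 / ε + 12) * s ^ (1 + ε) := by linarith
        _ ≤ C * s ^ (1 + ε) := by nlinarith
    · push_neg at h1
      have hlog_lb : -3 ≤ Real.log s := by
        calc (-3 : ℝ) = Real.log (Real.exp (-3)) := (Real.log_exp _).symm
          _ ≤ Real.log s := Real.log_le_log (Real.exp_pos _) h.le
      have hlog_ub : Real.log s ≤ 0 := Real.log_nonpos hspos.le h1.le
      have habs_log : |Real.log s| ≤ 3 := abs_le.mpr ⟨hlog_lb, by linarith⟩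
      have hexp1 : Real.exp (-3) ≤ 1 := Real.exp_le_one_iff.mpr (by norm_num)
      have hbound : |4 * s * Real.log s + 8 * s + 4 * Real.exp (-3)| ≤ 24 := by
        have h1' : |4 * s * Real.log s| ≤ 12 := by
          rw [abs_mul]
          have : |4 * s| = 4 * s := abs_of_nonneg (by positivity)
          rw [this]
          nlinarith [abs_nonneg (Real.log s)]
        have h2' : |8 * s + 4 * Real.exp (-3)| ≤ 12 := by
          rw [abs_of_nonneg (by positivity)]
          nlinarith
        calc |4 * s * Real.log s + 8 * s + 4 * Real.exp (-3)|
            = |4 * s * Real.log s + (8 * s + 4 * Real.exp (-3))| := by rw [add_assoc]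
          _ ≤ |4 * s * Real.log s| + |8 * s + 4 * Real.exp (-3)| := abs_add_le _ _
          _ ≤ 24 := by linarith
      have hrpow_lb : Real.exp (-(3 * (1 + ε))) ≤ s ^ (1 + ε) := by
        have : Real.exp (-3) ^ (1 + ε) ≤ s ^ (1 + ε) :=
          Real.rpow_le_rpow (Real.exp_pos _).le h.le (by positivity)
        rwa [← Real.exp_mul, show (-3) * (1 + ε) = -(3 * (1 + ε)) by ring] at this
      have key : 24 ≤ 24 * Real.exp (3 * (1 + ε)) * s ^ (1 + ε) := by
        have h24 : 24 * Real.exp (3 * (1 + ε)) * Real.exp (-(3 * (1 + ε))) = 24 := by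
          rw [mul_assoc, ← Real.exp_add]; simp
        calc (24 : ℝ) = 24 * Real.exp (3 * (1 + ε)) * Real.exp (-(3 * (1 + ε))) := h24.symm
          _ ≤ 24 * Real.exp (3 * (1 + ε)) * s ^ (1 + ε) :=
              mul_le_mul_of_nonneg_left hrpow_lb (by positivity)
      calc |4 * s * Real.log s + 8 * s + 4 * Real.exp (-3)| ≤ 24 := hbound
        _ ≤ 24 * Real.exp (3 * (1 + ε)) * s ^ (1 + ε) := key
        _ ≤ C * s ^ (1 + ε) := by
          have h12 : (0 : ℝ) < 12 + 4 / ε := by positivity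
          rw [hC]
          nlinarith [mul_pos h12 hrpow_pos]

lemma Bfun_lip {ε : ℝ} (hε : 0 < ε) {a b : ℝ} (ha : 0 ≤ a) (hb : 0 ≤ b) :
    |Bfun a - Bfun b| ≤
      (24 * Real.exp (3 * (1 + ε)) + 12 + 4 / ε) * (a ^ (1 + ε) + b ^ (1 + ε)) * |a - b| := by
  set C := 24 * Real.exp (3 * (1 + ε)) + 12 + 4 / ε with hC
  have hCpos : 0 < C := by positivity
  set K := C * (a ^ (1 + ε) + b ^ (1 + ε)) with hK
  have hconv : Convex ℝ (Set.uIcc a b) := convex_uIcc a b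
  have hmem : ∀ s ∈ Set.uIcc a b, 0 ≤ s ∧ s ≤ max a b := by
    intro s hs
    rw [Set.uIcc_eq_union] at hs
    rcases hs with hs | hs
    · exact ⟨ha.trans hs.1, hs.2.trans (le_max_right a b)⟩
    · exact ⟨hb.trans hs.1, hs.2.trans (le_max_left a b)⟩
  have hbound : ∀ s ∈ Set.uIcc a b, ‖Bder s‖ ≤ K := by
    intro s hs
    obtain ⟨hs0, hsM⟩ := hmem s hs
    have h1 : |Bder s| ≤ C * s ^ (1 + ε) := Bder_bound hε hs0
    have h2 : s ^ (1 + ε) ≤ (max a b) ^ (1 + ε) :=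
      Real.rpow_le_rpow hs0 hsM (by positivity)
    have h3 : (max a b) ^ (1 + ε) ≤ a ^ (1 + ε) + b ^ (1 + ε) := by
      rcases max_cases a b with ⟨h, _⟩ | ⟨h, _⟩
      · rw [h]; nlinarith [Real.rpow_nonneg hb (1 + ε)]
      · rw [h]; nlinarith [Real.rpow_nonneg ha (1 + ε)]
    calc ‖Bder s‖ = |Bder s| := rfl
      _ ≤ C * s ^ (1 + ε) := h1
      _ ≤ K := by rw [hK]; nlinarith
  have hderiv : ∀ s ∈ Set.uIcc a b, HasDerivWithinAt Bfun (Bder s) (Set.uIcc a b) s :=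
    fun s _ => (hasDerivAt_Bfun s).hasDerivWithinAt
  have := hconv.norm_image_sub_le_of_norm_hasDerivWithin_le hderiv hbound
    Set.right_mem_uIcc Set.left_mem_uIcc
  simpa [Real.norm_eq_abs, mul_assoc] using this

theorem B_local_lipschitz :
    ∀ ε : ℝ, 0 < ε → ∃ C : ℝ, 0 < C ∧
      ∀ z w : ℂ, |Bfun ‖z‖ - Bfun ‖w‖|
        ≤ C * (‖z‖ ^ (1 + ε) + ‖w‖ ^ (1 + ε)) * ‖z - w‖ := by
  intro ε hε
  refine ⟨24 * Real.exp (3 * (1 + ε)) + 12 + 4 / ε, by positivity, fun z w => ?_⟩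
  have h1 := Bfun_lip hε (norm_nonneg z) (norm_nonneg w)
  have h2 : |‖z‖ - ‖w‖| ≤ ‖z - w‖ := abs_norm_sub_norm_le z w
  have hnn : 0 ≤ (24 * Real.exp (3 * (1 + ε)) + 12 + 4 / ε) *
      (‖z‖ ^ (1 + ε) + ‖w‖ ^ (1 + ε)) := by positivity
  calc |Bfun ‖z‖ - Bfun ‖w‖|
      ≤ (24 * Real.exp (3 * (1 + ε)) + 12 + 4 / ε) *
        (‖z‖ ^ (1 + ε) + ‖w‖ ^ (1 + ε)) * |‖z‖ - ‖w‖| := h1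
    _ ≤ (24 * Real.exp (3 * (1 + ε)) + 12 + 4 / ε) *
        (‖z‖ ^ (1 + ε) + ‖w‖ ^ (1 + ε)) * ‖z - w‖ :=
        mul_le_mul_of_nonneg_left h2 hnn
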